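/- On ℝⁿ with n ≥ 3, let b₁ = eₙ and b₂(x) = e₁ + Σ_{i=2}^{n−1} x^{i+1} e_i be the input vector fields of the chained form, and define vector fields c₀ = b₁ and c_{k+1} = [c_k, b₂]. Then for every k with 1 ≤ k ≤ n−2, c_k is the constant vector field e_{n−k}. -/

import Mathlib

/-!
On ℝⁿ (n ≥ 3) with coordinates x¹,…,xⁿ (0-based indices 0,…,n−1), the chained form has
input vector fields b₁ = eₙ and b₂(x) = e₁ + Σ_{i=2}^{n−1} x^{i+1} e_i.
-/

/-- `b₁ = eₙ`, the n-th standard basis vector as a constant vector field (componentwise). -/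
noncomputable def chainedB1 (n : ℕ) : (Fin n → ℝ) → (Fin n → ℝ) :=
  fun _ j => if j.val = n - 1 then 1 else 0

/-- `b₂(x) = e₁ + Σ_{i=2}^{n−1} x^{i+1} e_i` (componentwise, 0-based indices). -/
noncomputable def chainedB2 (n : ℕ) : (Fin n → ℝ) → (Fin n → ℝ) :=
  fun x j => if j.val = 0 then 1 else if h : j.val + 1 < n then x ⟨j.val + 1, h⟩ else 0

/-- `c₀ = b₁`, `c_{k+1} = [c_k, b₂]`. -/
noncomputable def chainedIter (n : ℕ) : ℕ → ((Fin n → ℝ) → (Fin n → ℝ))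
  | 0 => chainedB1 n
  | k + 1 => VectorField.lieBracket ℝ (chainedIter n k) (chainedB2 n)

/-- The linear part of `chainedB2`. -/
noncomputable def chainedL (n : ℕ) : (Fin n → ℝ) →L[ℝ] (Fin n → ℝ) :=
  ContinuousLinearMap.pi (fun j =>
    if h : j.val ≠ 0 ∧ j.val + 1 < n then
      ContinuousLinearMap.proj (⟨j.val + 1, h.2⟩ : Fin n) else 0)

lemma single_val (n : ℕ) (a b : Fin n) :
    (Pi.single a 1 : Fin n → ℝ) b = if b.val = a.val then 1 else 0 := by
  rw [Pi.single_apply]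
  simp [Fin.ext_iff, eq_comm]

lemma chainedB2_affine (n : ℕ) : chainedB2 n = fun x => chainedB2 n 0 + chainedL n x := by
  funext x j
  simp only [chainedB2, chainedL, Pi.add_apply, ContinuousLinearMap.pi_apply]
  split_ifs with h1 h2 h3 <;>
    simp_all [ContinuousLinearMap.proj_apply]

lemma hasFDeriv_chainedB2 (n : ℕ) (x : Fin n → ℝ) :
    HasFDerivAt (chainedB2 n) (chainedL n) x := by
  rw [chainedB2_affine]
  exact (chainedL n).hasFDerivAt.const_add _

lemma bracket_single (n m : ℕ) (h2 : 2 ≤ m) (hm : m < n) :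
    VectorField.lieBracket ℝ (fun _ => Pi.single (⟨m, hm⟩ : Fin n) (1 : ℝ)) (chainedB2 n)
      = fun _ => Pi.single (⟨m - 1, by omega⟩ : Fin n) (1 : ℝ) := by
  funext x
  rw [VectorField.lieBracket, (hasFDeriv_chainedB2 n x).fderiv, fderiv_fun_const]
  simp only [Pi.zero_apply, ContinuousLinearMap.zero_apply, sub_zero]
  funext j
  rw [single_val]
  simp only [chainedL, ContinuousLinearMap.pi_apply]
  by_cases h : j.val ≠ 0 ∧ j.val + 1 < n
  · rw [dif_pos h, ContinuousLinearMap.proj_apply, single_val]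
    simp only [Fin.val_mk]
    split_ifs with q1 q2 <;> first | rfl | (exfalso; omega)
  · rw [dif_neg h, ContinuousLinearMap.zero_apply]
    push_neg at h
    rw [if_neg (by omega)]

lemma chainedIter_eq (n : ℕ) (hn : 3 ≤ n) :
    ∀ k, k ≤ n - 2 →
      chainedIter n k = fun _ => Pi.single (⟨n - k - 1, by omega⟩ : Fin n) (1 : ℝ)
  | 0, _ => by
    funext x j
    rw [single_val]
    simp [chainedIter, chainedB1]
  | (k + 1), hk => by
    rw [chainedIter, chainedIter_eq n hn k (by omega),
      bracket_single n (n - k - 1) (by omega) (by omega)]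
    funext x j
    rw [single_val, single_val]
    congr 2

/-- For every `1 ≤ k ≤ n − 2`, `c_k` is the constant vector field `e_{n−k}`
(0-based index `n − k − 1`). -/
theorem stmt0 (n : ℕ) (hn : 3 ≤ n) (k : ℕ) (hk1 : 1 ≤ k) (hk2 : k ≤ n - 2) :
    chainedIter n k = fun _ => Pi.single (⟨n - k - 1, by omega⟩ : Fin n) (1 : ℝ) := by
  exact chainedIter_eq n hn k hk2
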